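/- Let V be a finite set equipped with a linear order ≺, and let P₁, …, P_k be finite sequences of pairwise distinct elements of V, each of which is monotone with respect to ≺ (its elements appear in strictly increasing or strictly decreasing ≺-order). Let G be the finite simple graph on V whose edges are exactly the pairs of consecutive elements of the sequences P₁, …, P_k. Then G has treewidth at most k. -/

import Mathlib

/-- A tree decomposition of a simple graph `G`: a tree `T` with a bag of vertices
of `G` at each node, such that every vertex and every edge of `G` is covered by
some bag, and for each vertex the set of nodes whose bags contain it induces a
connected subtree. -/
structure TreeDecomposition {V : Type*} (G : SimpleGraph V) where
  ι : Type
  tree : SimpleGraph ι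
  isTree : tree.IsTree
  bag : ι → Set V
  mem_bag : ∀ v : V, ∃ u, v ∈ bag u
  edge_bag : ∀ ⦃v w : V⦄, G.Adj v w → ∃ u, v ∈ bag u ∧ w ∈ bag u
  bag_connected : ∀ v : V, (tree.induce {u | v ∈ bag u}).Connected

/-- `G` has treewidth at most `w`: it admits a tree decomposition all of whose
bags are finite of size at most `w + 1`. -/
def SimpleGraph.treewidthLE {V : Type*} (G : SimpleGraph V) (w : ℕ) : Prop :=
  ∃ D : TreeDecomposition G, ∀ u, (D.bag u).Finite ∧ (D.bag u).ncard ≤ w + 1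


section Aux


def NPath : SimpleGraph ℕ := SimpleGraph.fromRel (fun a b => a + 1 = b)

lemma npath_adj {a b : ℕ} : NPath.Adj a b ↔ a ≠ b ∧ (a + 1 = b ∨ b + 1 = a) := by
  simp [NPath, SimpleGraph.fromRel_adj]

lemma npath_adj_succ (a : ℕ) : NPath.Adj a (a + 1) := by
  rw [npath_adj]; omega

lemma npath_reach0 (t : ℕ) : NPath.Reachable 0 t := by
  induction t with
  | zero => rfl
  | succ t ih => exact ih.trans (npath_adj_succ t).reachable

lemma npath_isTree : NPath.IsTree := by
  constructor
  · exact ⟨fun u v => (npath_reach0 u).symm.trans (npath_reach0 v)⟩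
  · rw [SimpleGraph.isAcyclic_iff_forall_adj_isBridge]
    intro v w hvw
    rw [SimpleGraph.isBridge_iff]
    intro hr
    rw [npath_adj] at hvw
    have key : ∀ {a b : ℕ}, (NPath \ SimpleGraph.fromEdgeSet {s(v, w)}).Adj a b →
        (a ≤ v ∧ a ≤ w ↔ b ≤ v ∧ b ≤ w) := by
      intro a b hab
      rw [SimpleGraph.sdiff_adj, SimpleGraph.fromEdgeSet_adj, npath_adj] at hab
      obtain ⟨⟨hne, hstep⟩, hnot⟩ := hab
      have hne' : ¬((a = v ∧ b = w) ∨ (a = w ∧ b = v)) := fun h =>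
        hnot ⟨by simp [Sym2.eq_iff.mpr h], hne⟩
      push_neg at hne'
      obtain ⟨h1, h2⟩ := hne'
      omega
    obtain ⟨p⟩ := hr
    have walkinv : ∀ {x y : ℕ} (p : (NPath \ SimpleGraph.fromEdgeSet {s(v, w)}).Walk x y),
        (x ≤ v ∧ x ≤ w ↔ y ≤ v ∧ y ≤ w) := by
      intro x y p
      induction p with
      | nil => rfl
      | cons h _ ih => exact (key h).trans ih
    have := walkinv p
    omega

lemma npath_induce_connected (S : Set ℕ) (a : ℕ) (ha : a ∈ S)
    (hmin : ∀ t ∈ S, a ≤ t)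
    (hconv : ∀ t ∈ S, ∀ s, a ≤ s → s ≤ t → s ∈ S) :
    (NPath.induce S).Connected := by
  haveI : Nonempty S := ⟨⟨a, ha⟩⟩
  rw [SimpleGraph.connected_iff]
  refine ⟨fun x y => ?_, inferInstance⟩
  suffices H : ∀ (t : ℕ) (ht : t ∈ S), (NPath.induce S).Reachable ⟨a, ha⟩ ⟨t, ht⟩ by
    exact (H x.1 x.2).symm.trans (H y.1 y.2)
  intro t ht
  induction t with
  | zero =>
      have : a = 0 := Nat.le_zero.mp (hmin 0 ht)
      subst this; rfl
  | succ t ih =>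
      rcases Nat.lt_or_ge a (t + 1) with h | h
      · have ht' : t ∈ S := hconv (t + 1) ht t (by omega) (by omega)
        have step : (NPath.induce S).Adj ⟨t, ht'⟩ ⟨t + 1, ht⟩ := by
          show NPath.Adj t (t + 1)
          exact npath_adj_succ t
        exact (ih ht').trans step.reachable
      · have : a = t + 1 := le_antisymm (hmin _ ht) h
        subst this; rfl


def Consec {V : Type*} (l : List V) (a b : V) : Prop :=
  ∃ (m : ℕ) (hm : m + 1 < l.length),
    (l.get ⟨m, Nat.lt_of_succ_lt hm⟩ = a ∧ l.get ⟨m + 1, hm⟩ = b) ∨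
    (l.get ⟨m, Nat.lt_of_succ_lt hm⟩ = b ∧ l.get ⟨m + 1, hm⟩ = a)



lemma consec_unique {V : Type*} [LinearOrder V] {l : List V}
    (hs : l.Pairwise (· < ·) ∨ l.Pairwise (· > ·)) {a b a' b' x : V}
    (h1 : Consec l a b) (h2 : Consec l a' b') (hab : a < b) (hab' : a' < b')
    (hx1 : a < x) (hx2 : x ≤ b) (hx1' : a' < x) (hx2' : x ≤ b') : a = a' ∧ b = b' := by
  obtain ⟨m, hm, hor⟩ := h1
  obtain ⟨m', hm', hor'⟩ := h2
  rcases hs with hs | hs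
  · have mono : ∀ i j : Fin l.length, i < j → l.get i < l.get j :=
      List.pairwise_iff_get.mp hs
    have e1 : l.get ⟨m, Nat.lt_of_succ_lt hm⟩ = a ∧ l.get ⟨m + 1, hm⟩ = b := by
      rcases hor with h | h
      · exact h
      · exfalso
        have := mono ⟨m, Nat.lt_of_succ_lt hm⟩ ⟨m + 1, hm⟩ (by simp)
        rw [h.1, h.2] at this
        exact absurd (this.trans hab) (lt_irrefl _)
    have e2 : l.get ⟨m', Nat.lt_of_succ_lt hm'⟩ = a' ∧ l.get ⟨m' + 1, hm'⟩ = b' := by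
      rcases hor' with h | h
      · exact h
      · exfalso
        have := mono ⟨m', Nat.lt_of_succ_lt hm'⟩ ⟨m' + 1, hm'⟩ (by simp)
        rw [h.1, h.2] at this
        exact absurd (this.trans hab') (lt_irrefl _)
    have hmm : m = m' := by
      by_contra hne
      rcases Nat.lt_or_ge m m' with h | h
      · have : l.get ⟨m + 1, hm⟩ ≤ l.get ⟨m', Nat.lt_of_succ_lt hm'⟩ := by
          rcases Nat.lt_or_ge (m + 1) m' with h' | h'
          · exact le_of_lt (mono _ _ (by simpa using h'))
          · have : m + 1 = m' := by omega
            subst this; rfl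
        rw [e1.2, e2.1] at this
        exact absurd ((this.trans_lt hx1').trans_le hx2) (lt_irrefl _)
      · have h : m' < m := by omega
        have : l.get ⟨m' + 1, hm'⟩ ≤ l.get ⟨m, Nat.lt_of_succ_lt hm⟩ := by
          rcases Nat.lt_or_ge (m' + 1) m with h' | h'
          · exact le_of_lt (mono _ _ (by simpa using h'))
          · have : m' + 1 = m := by omega
            subst this; rfl
        rw [e2.2, e1.1] at this
        exact absurd ((this.trans_lt hx1).trans_le hx2') (lt_irrefl _)
    subst hmm
    exact ⟨e1.1.symm.trans e2.1, e1.2.symm.trans e2.2⟩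
  · have mono : ∀ i j : Fin l.length, i < j → l.get j < l.get i := by
      have := List.pairwise_iff_get.mp hs
      exact fun i j h => this i j h
    have e1 : l.get ⟨m, Nat.lt_of_succ_lt hm⟩ = b ∧ l.get ⟨m + 1, hm⟩ = a := by
      rcases hor with h | h
      · exfalso
        have := mono ⟨m, Nat.lt_of_succ_lt hm⟩ ⟨m + 1, hm⟩ (by simp)
        rw [h.1, h.2] at this
        exact absurd (this.trans hab) (lt_irrefl _)
      · exact h
    have e2 : l.get ⟨m', Nat.lt_of_succ_lt hm'⟩ = b' ∧ l.get ⟨m' + 1, hm'⟩ = a' := by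
      rcases hor' with h | h
      · exfalso
        have := mono ⟨m', Nat.lt_of_succ_lt hm'⟩ ⟨m' + 1, hm'⟩ (by simp)
        rw [h.1, h.2] at this
        exact absurd (this.trans hab') (lt_irrefl _)
      · exact h
    have hmm : m = m' := by
      by_contra hne
      rcases Nat.lt_or_ge m m' with h | h
      · have : l.get ⟨m', Nat.lt_of_succ_lt hm'⟩ ≤ l.get ⟨m + 1, hm⟩ := by
          rcases Nat.lt_or_ge (m + 1) m' with h' | h'
          · exact le_of_lt (mono _ _ (by simpa using h'))
          · have : m + 1 = m' := by omega
            subst this; rfl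
        rw [e1.2, e2.1] at this
        exact absurd ((hx2'.trans this).trans_lt hx1) (lt_irrefl x)
      · have h : m' < m := by omega
        have : l.get ⟨m, Nat.lt_of_succ_lt hm⟩ ≤ l.get ⟨m' + 1, hm'⟩ := by
          rcases Nat.lt_or_ge (m' + 1) m with h' | h'
          · exact le_of_lt (mono _ _ (by simpa using h'))
          · have : m' + 1 = m := by omega
            subst this; rfl
        rw [e2.2, e1.1] at this
        exact absurd ((hx2.trans this).trans_lt hx1') (lt_irrefl x)
    subst hmm
    exact ⟨e1.2.symm.trans e2.2, e1.1.symm.trans e2.1⟩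

open Classical in
noncomputable def crossLeft {V : Type*} [LinearOrder V] {k : ℕ}
    (P : Fin k → List V) (i : Fin k) (x : V) : V :=
  if h : ∃ ab : V × V, ab.1 < ab.2 ∧ Consec (P i) ab.1 ab.2 ∧ ab.1 < x ∧ x ≤ ab.2
  then h.choose.1 else x

noncomputable def bagV {V : Type*} [LinearOrder V] {k : ℕ}
    (P : Fin k → List V) (x : V) : Set V :=
  insert x (Set.range fun i => crossLeft P i x)

lemma mem_bagV_iff {V : Type*} [LinearOrder V] {k : ℕ} {P : Fin k → List V}
    (hmono : ∀ i, (P i).Pairwise (· < ·) ∨ (P i).Pairwise (· > ·)) {v x : V} :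
    v ∈ bagV P x ↔ v = x ∨ ∃ (i : Fin k) (b : V),
      v < b ∧ Consec (P i) v b ∧ v < x ∧ x ≤ b := by
  constructor
  · intro hv
    rcases Set.mem_insert_iff.mp hv with h | h
    · exact Or.inl h
    · obtain ⟨i, hi⟩ := h
      by_cases hc : ∃ ab : V × V, ab.1 < ab.2 ∧ Consec (P i) ab.1 ab.2 ∧ ab.1 < x ∧ x ≤ ab.2
      · have hspec := hc.choose_spec
        simp only [crossLeft, dif_pos hc] at hi
        exact Or.inr ⟨i, hc.choose.2, hi ▸ hspec.1, hi ▸ hspec.2.1, hi ▸ hspec.2.2.1,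
          hspec.2.2.2⟩
      · simp only [crossLeft, dif_neg hc] at hi
        exact Or.inl hi.symm
  · rintro (h | ⟨i, b, h1, h2, h3, h4⟩)
    · exact h ▸ Set.mem_insert _ _
    · have hc : ∃ ab : V × V, ab.1 < ab.2 ∧ Consec (P i) ab.1 ab.2 ∧ ab.1 < x ∧ x ≤ ab.2 :=
        ⟨(v, b), h1, h2, h3, h4⟩
      have hspec := hc.choose_spec
      have heq : hc.choose.1 = v :=
        (consec_unique (hmono i) hspec.2.1 h2 hspec.1 h1 hspec.2.2.1 hspec.2.2.2 h3 h4).1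
      refine Set.mem_insert_iff.mpr (Or.inr ⟨i, ?_⟩)
      show crossLeft P i x = v
      simp only [crossLeft, dif_pos hc, heq]




end Aux

/-- The footprint of a monotone `k`-path temporal graph has treewidth at most `k`:
if each list `P i` is duplicate-free and monotone with respect to a linear order on
`V`, then the graph whose edges are exactly the pairs of consecutive elements of
the lists has treewidth at most `k`. -/
theorem monotone_paths_treewidth {V : Type*} [Fintype V] [LinearOrder V] (k : ℕ)
    (P : Fin k → List V)
    (hnodup : ∀ i, (P i).Nodup)
    (hmono : ∀ i, (P i).Pairwise (· < ·) ∨ (P i).Pairwise (· > ·))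
    (G : SimpleGraph V)
    (hadj : ∀ u v : V, G.Adj u v ↔ u ≠ v ∧
      ∃ (i : Fin k) (m : ℕ) (hm : m + 1 < (P i).length),
        (((P i).get ⟨m, Nat.lt_of_succ_lt hm⟩ = u ∧ (P i).get ⟨m + 1, hm⟩ = v) ∨
         ((P i).get ⟨m, Nat.lt_of_succ_lt hm⟩ = v ∧ (P i).get ⟨m + 1, hm⟩ = u))) :
    G.treewidthLE k := by
  classical
  by_cases hV : Nonempty V
  case neg =>
    refine ⟨⟨ℕ, NPath, npath_isTree, fun _ => ∅, fun v => absurd ⟨v⟩ hV,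
      fun v w _ => absurd ⟨v⟩ hV, fun v => absurd ⟨v⟩ hV⟩, fun u => ?_⟩
    simp
  case pos =>
    obtain ⟨v0⟩ := hV
    set n := Fintype.card V with hn
    have hn0 : 0 < n := Fintype.card_pos_iff.mpr ⟨v0⟩
    let e : Fin n ≃o V := monoEquivOfFin V rfl
    let f : ℕ → V := fun t => e ⟨min t (n - 1), by omega⟩
    have hf_mono : Monotone f := fun s t hst =>
      e.monotone (Fin.mk_le_mk.mpr (by omega))
    have hfp : ∀ v : V, f ((e.symm v : ℕ)) = v := by
      intro v
      have hlt : (e.symm v : ℕ) < n := (e.symm v).2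
      show e ⟨min ((e.symm v : ℕ)) (n - 1), _⟩ = v
      have hmk : (⟨min ((e.symm v : ℕ)) (n - 1), by omega⟩ : Fin n) = e.symm v :=
        Fin.ext (by simp; omega)
      rw [hmk, OrderIso.apply_symm_apply]
    have hsymm_f : ∀ t : ℕ, ((e.symm (f t) : ℕ)) = min t (n - 1) := by
      intro t
      show ((e.symm (e _) : ℕ)) = _
      rw [OrderIso.symm_apply_apply]
    refine ⟨⟨ℕ, NPath, npath_isTree, fun t => bagV P (f t), ?_, ?_, ?_⟩, fun t => ?_⟩
    · intro v
      refine ⟨(e.symm v : ℕ), ?_⟩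
      show v ∈ bagV P (f _)
      rw [hfp v]; exact Set.mem_insert _ _
    · intro u v huv
      rw [hadj] at huv
      obtain ⟨hne, i, m, hm, hor⟩ := huv
      have hc : Consec (P i) u v := ⟨m, hm, hor⟩
      have hc' : Consec (P i) v u := ⟨m, hm, hor.symm⟩
      rcases hne.lt_or_gt with hlt | hlt
      · refine ⟨(e.symm v : ℕ), ?_, ?_⟩
        · show u ∈ bagV P (f _)
          rw [hfp v]
          exact (mem_bagV_iff hmono).mpr (Or.inr ⟨i, v, hlt, hc, hlt, le_refl v⟩)
        · show v ∈ bagV P (f _)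
          rw [hfp v]; exact Set.mem_insert _ _
      · refine ⟨(e.symm u : ℕ), ?_, ?_⟩
        · show u ∈ bagV P (f _)
          rw [hfp u]; exact Set.mem_insert _ _
        · show v ∈ bagV P (f _)
          rw [hfp u]
          exact (mem_bagV_iff hmono).mpr (Or.inr ⟨i, u, hlt, hc', hlt, le_refl u⟩)
    · intro v
      apply npath_induce_connected _ ((e.symm v : ℕ))
      · show v ∈ bagV P (f ((e.symm v : ℕ)))
        rw [hfp v]; exact Set.mem_insert _ _
      · intro t ht
        replace ht : v ∈ bagV P (f t) := ht
        rcases (mem_bagV_iff hmono).mp ht with h | ⟨i, b, h1, h2, h3, h4⟩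
        · have := hsymm_f t
          rw [← h] at this
          omega
        · have hlt : e.symm v < e.symm (f t) := e.symm.strictMono h3
          have := hsymm_f t
          rw [Fin.lt_iff_val_lt_val] at hlt
          omega
      · intro t ht s hs1 hs2
        replace ht : v ∈ bagV P (f t) := ht
        show v ∈ bagV P (f s)
        have hvs : v ≤ f s := by
          calc v = f ((e.symm v : ℕ)) := (hfp v).symm
          _ ≤ f s := hf_mono hs1
        have hst : f s ≤ f t := hf_mono hs2
        rcases eq_or_lt_of_le hvs with heq | hlt
        · exact (mem_bagV_iff hmono).mpr (Or.inl heq)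
        · rcases (mem_bagV_iff hmono).mp ht with h | ⟨i, b, h1, h2, h3, h4⟩
          · exact absurd (hlt.trans_le (hst.trans_eq h.symm)) (lt_irrefl v)
          · exact (mem_bagV_iff hmono).mpr
              (Or.inr ⟨i, b, h1, h2, hlt, hst.trans h4⟩)
    · constructor
      · exact (Set.finite_range _).insert _
      · refine le_trans (Set.ncard_insert_le _ _) ?_
        have : (Set.range fun i : Fin k => crossLeft P i (f t)).ncard ≤ k := by
          rw [← Set.image_univ]
          refine le_trans (Set.ncard_image_le Set.finite_univ) ?_
          simp [Set.ncard_univ]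
        omega
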